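/- Let P ⊂ ℝ^d be a rational d-polytope, v ∈ ℝ^d, let q be a positive integer such that qP is integral, and let k ∈ ℤ_{≥0}. If f is a real polynomial satisfying f(t) = #((tP + v) ∩ ℤ^d) for every t ∈ ℤ_{≥0} with t ≡ k (mod q), then f has degree exactly d and the coefficient of t^d in f equals the d-dimensional Lebesgue volume of P. -/

import Mathlib

open Set Pointwise MeasureTheory Filter Topology ENNReal

noncomputable section

/-- The lattice `ℤ^d` inside `ℝ^d`. -/
def latticePts (d : ℕ) : Set (Fin d → ℝ) := {x | ∀ i, ∃ n : ℤ, x i = (n : ℝ)}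

/-- A point of `ℝ^d` with all coordinates rational. -/
def IsRationalPoint {d : ℕ} (x : Fin d → ℝ) : Prop := ∀ i, ∃ q : ℚ, x i = (q : ℝ)

/-- A rational `d`-polytope in `ℝ^d`: the convex hull of finitely many rational points
whose affine span is all of `ℝ^d`. -/
def IsRationalDPolytope {d : ℕ} (P : Set (Fin d → ℝ)) : Prop :=
  ∃ V : Finset (Fin d → ℝ), (∀ x ∈ V, IsRationalPoint x) ∧
    P = convexHull ℝ (V : Set (Fin d → ℝ)) ∧ affineSpan ℝ P = ⊤

/-- `TL P v t = #((tP + v) ∩ ℤ^d)`, the translated lattice points enumerator. -/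
def TL {d : ℕ} (P : Set (Fin d → ℝ)) (v : Fin d → ℝ) (t : ℕ) : ℕ :=
  (((fun x => (t : ℝ) • x + v) '' P) ∩ latticePts d).ncard

namespace Ehr
variable {d : ℕ}
def intVec (n : Fin d → ℤ) : Fin d → ℝ := fun i => (n i : ℝ)


lemma latticePts_eq_range : latticePts d = Set.range intVec := by
  ext x
  constructor
  · intro hx
    exact ⟨fun i => (hx i).choose, funext fun i => ((hx i).choose_spec).symm⟩
  · rintro ⟨n, rfl⟩ i; exact ⟨n i, rfl⟩


lemma finite_lattice_inter {S : Set (Fin d → ℝ)} (hS : Bornology.IsBounded S) :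
    (S ∩ latticePts d).Finite := by
  obtain ⟨R, hR⟩ := hS.subset_closedBall 0
  have hsub : S ∩ latticePts d ⊆ intVec '' {n : Fin d → ℤ | ∀ i, n i ∈ Set.Icc (-⌈R⌉) ⌈R⌉} := by
    rintro x ⟨hxS, hxl⟩
    rw [latticePts_eq_range] at hxl
    obtain ⟨n, rfl⟩ := hxl
    refine ⟨n, fun i => ?_, rfl⟩
    have hx := hR hxS
    rw [Metric.mem_closedBall, dist_zero_right] at hx
    have hni : |(n i : ℝ)| ≤ R := by
      calc |(n i : ℝ)| = ‖intVec n i‖ := rfl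
        _ ≤ ‖intVec n‖ := norm_le_pi_norm _ i
        _ ≤ R := hx
    have : |(n i : ℝ)| ≤ (⌈R⌉ : ℝ) := hni.trans (Int.le_ceil R)
    rw [abs_le] at this
    constructor
    · exact_mod_cast this.1
    · exact_mod_cast this.2
  refine Set.Finite.subset (Set.Finite.image _ ?_) hsub
  have : {n : Fin d → ℤ | ∀ i, n i ∈ Set.Icc (-⌈R⌉) ⌈R⌉}
      = Set.pi Set.univ (fun _ => Set.Icc (-⌈R⌉) ⌈R⌉) := by
    ext n
    constructor
    · intro h i _; exact h i
    · intro h i; exact h i (Set.mem_univ i)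
  rw [this]
  exact Set.Finite.pi fun _ => Set.finite_Icc _ _


def cube (d : ℕ) : Set (Fin d → ℝ) := Set.pi Set.univ fun _ => Ico (0:ℝ) 1


lemma measurableSet_cube : MeasurableSet (cube d) :=
  MeasurableSet.univ_pi fun _ => measurableSet_Ico


lemma volume_cube : volume (cube d) = 1 := by
  simp [cube, volume_pi_pi]


lemma norm_le_one_of_mem_cube {x : Fin d → ℝ} (hx : x ∈ cube d) : ‖x‖ ≤ 1 := by
  refine (pi_norm_le_iff_of_nonneg zero_le_one).2 fun i => ?_
  have := hx i (Set.mem_univ i)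
  rw [Real.norm_eq_abs, abs_le]
  constructor <;> [linarith [this.1]; linarith [this.2]]


lemma eq_floor_of_mem_cube {z x : Fin d → ℝ} (hz : z ∈ latticePts d)
    (hx : x ∈ (z + ·) '' cube d) (i : Fin d) : z i = (⌊x i⌋ : ℝ) := by
  obtain ⟨w, hw, rfl⟩ := hx
  obtain ⟨n, hn⟩ := hz i
  have h1 : (0:ℝ) ≤ w i := (hw i (Set.mem_univ i)).1
  have h2 : w i < 1 := (hw i (Set.mem_univ i)).2
  have : ⌊(z + w) i⌋ = n := by
    rw [Int.floor_eq_iff]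
    constructor
    · simp only [Pi.add_apply, hn]; linarith
    · simp only [Pi.add_apply, hn]; linarith
  rw [this, hn]


lemma pairwise_disjoint_cubes :
    (latticePts d).PairwiseDisjoint (fun z => (z + ·) '' cube d) := by
  intro z hz z' hz' hne
  refine Set.disjoint_left.2 fun x hx hx' => hne ?_
  funext i
  rw [eq_floor_of_mem_cube hz hx i, eq_floor_of_mem_cube hz' hx' i]


lemma volume_cube_translate (z : Fin d → ℝ) : volume ((z + ·) '' cube d) = 1 := by
  rw [Set.image_add_left, measure_preimage_add, volume_cube]


lemma measurableSet_cube_translate (z : Fin d → ℝ) :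
    MeasurableSet ((z + ·) '' cube d) := by
  rw [Set.image_add_left]
  exact measurableSet_cube.preimage (measurable_const_add _)


lemma count_eq_volume {S : Set (Fin d → ℝ)} (hfin : (S ∩ latticePts d).Finite) :
    ((S ∩ latticePts d).ncard : ℝ≥0∞)
      = volume (⋃ z ∈ S ∩ latticePts d, (z + ·) '' cube d) := by
  classical
  rw [Set.biUnion_eq_iUnion]
  have hdisj : Pairwise (Function.onFun Disjoint
      fun z : ↥(S ∩ latticePts d) => ((z : Fin d → ℝ) + ·) '' cube d) := by
    rintro ⟨z, hz⟩ ⟨z', hz'⟩ hne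
    exact pairwise_disjoint_cubes hz.2 hz'.2 (fun h => hne (by simpa using h))
  haveI := hfin.countable.to_subtype
  rw [measure_iUnion hdisj (fun z => measurableSet_cube_translate _)]
  rw [tsum_congr (fun z : ↥(S ∩ latticePts d) => volume_cube_translate (z : Fin d → ℝ))]
  haveI := hfin.fintype
  rw [tsum_eq_sum (s := (Finset.univ : Finset ↥(S ∩ latticePts d))) (by simp)]
  rw [Finset.sum_const, Finset.card_univ, nsmul_eq_mul, mul_one, ← Nat.card_eq_fintype_card,
    Nat.card_coe_set_eq]


lemma subset_biUnion_of_closedBall {S T : Set (Fin d → ℝ)}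
    (h : ∀ x ∈ T, Metric.closedBall x 1 ⊆ S) :
    T ⊆ ⋃ z ∈ S ∩ latticePts d, (z + ·) '' cube d := by
  intro x hx
  set z : Fin d → ℝ := fun i => (⌊x i⌋ : ℝ) with hzdef
  have hz_lat : z ∈ latticePts d := fun i => ⟨⌊x i⌋, rfl⟩
  have hfr : ∀ i, 0 ≤ x i - z i ∧ x i - z i < 1 := fun i =>
    ⟨by simp [hzdef, Int.floor_le], by simp only [hzdef]; linarith [Int.lt_floor_add_one (x i)]⟩
  have hz_S : z ∈ S := by
    refine h x hx ?_
    rw [Metric.mem_closedBall, dist_eq_norm]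
    refine (pi_norm_le_iff_of_nonneg zero_le_one).2 fun i => ?_
    rw [Pi.sub_apply, Real.norm_eq_abs, abs_le]
    exact ⟨by linarith [(hfr i).2], by linarith [(hfr i).1]⟩
  refine Set.mem_biUnion ⟨hz_S, hz_lat⟩ ⟨x - z, fun i _ => ⟨(hfr i).1, (hfr i).2⟩, by simp⟩

lemma volume_affine_image (a : ℝ) (ha : 0 ≤ a) (w : Fin d → ℝ) (A : Set (Fin d → ℝ)) :
    volume ((fun x => a • x + w) '' A) = ENNReal.ofReal (a ^ d) * volume A := by
  have h1 : (fun x => a • x + w) '' A = (· + w) '' (a • A) := by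
    rw [← Set.image_smul, Set.image_image]
  rw [h1, Set.image_add_right, measure_preimage_add_right,
    Measure.addHaar_smul_of_nonneg volume ha, Module.finrank_fin_fun]


lemma sandwich {P : Set (Fin d → ℝ)} (hconv : Convex ℝ P) (hcomp : IsCompact P)
    {x0 : Fin d → ℝ} {ε : ℝ} (hε : 0 < ε) (hball : Metric.closedBall x0 ε ⊆ P)
    (v : Fin d → ℝ) {t : ℕ} (ht : 1/ε ≤ (t : ℝ)) :
    ENNReal.ofReal (((t:ℝ) - 1/ε)^d) * volume P ≤ (TL P v t : ℝ≥0∞) ∧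
      (TL P v t : ℝ≥0∞) ≤ ENNReal.ofReal (((t:ℝ) + 1/ε)^d) * volume P := by
  set s : ℝ := 1/ε with hsdef
  have hs : 0 < s := by positivity
  have hsε : s * ε = 1 := by rw [hsdef]; field_simp
  set S := (fun x => (t:ℝ) • x + v) '' P with hSdef
  have hbd : Bornology.IsBounded S :=
    (hcomp.image ((continuous_id.const_smul ((t:ℝ))).add continuous_const)).isBounded
  have hfin := finite_lattice_inter hbd
  have hTL : (TL P v t : ℝ≥0∞) = volume (⋃ z ∈ S ∩ latticePts d, (z + ·) '' cube d) := by
    rw [TL]; exact count_eq_volume hfin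
  have hnear : ∀ w : Fin d → ℝ, ‖w‖ ≤ 1 → x0 + ε • w ∈ P := by
    intro w hw
    refine hball ?_
    rw [Metric.mem_closedBall, dist_eq_norm, add_sub_cancel_left, norm_smul,
      Real.norm_eq_abs, abs_of_pos hε]
    nlinarith [norm_nonneg w]
  have hsubU : (⋃ z ∈ S ∩ latticePts d, (z + ·) '' cube d)
      ⊆ (fun x => ((t:ℝ) + s) • x + (v - s • x0)) '' P := by
    intro y hy
    simp only [Set.mem_iUnion, exists_prop] at hy
    obtain ⟨z, ⟨hzS, _⟩, w, hw, rfl⟩ := hy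
    obtain ⟨p, hp, rfl⟩ := hzS
    have hwn : ‖w‖ ≤ 1 := norm_le_one_of_mem_cube hw
    have key : (t:ℝ) • p + s • (x0 + ε • w) ∈ ((t:ℝ) + s) • P := by
      rw [hconv.add_smul (by positivity) hs.le]
      exact Set.add_mem_add (Set.smul_mem_smul_set hp)
        (Set.smul_mem_smul_set (hnear w hwn))
    obtain ⟨p'', hp'', hpe⟩ := key
    beta_reduce at hpe
    refine ⟨p'', hp'', ?_⟩
    show ((t:ℝ) + s) • p'' + (v - s • x0) = ((t:ℝ) • p + v) + w
    rw [hpe, smul_add, smul_smul, hsε, one_smul]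
    abel
  have hsubL : (fun x => ((t:ℝ) - s) • x + (v + s • x0)) '' P
      ⊆ ⋃ z ∈ S ∩ latticePts d, (z + ·) '' cube d := by
    refine subset_biUnion_of_closedBall fun x hx => ?_
    obtain ⟨p, hp, rfl⟩ := hx
    intro y hy
    set w := y - (((t:ℝ) - s) • p + (v + s • x0)) with hwdef
    have hwn : ‖w‖ ≤ 1 := by
      rw [hwdef]; exact mem_closedBall_iff_norm.1 hy
    have h2 : ((t:ℝ) - s) + s = (t:ℝ) := by ring
    have key : ((t:ℝ) - s) • p + s • (x0 + ε • w) ∈ (((t:ℝ) - s) + s) • P := by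
      rw [hconv.add_smul (by linarith) hs.le]
      exact Set.add_mem_add (Set.smul_mem_smul_set hp)
        (Set.smul_mem_smul_set (hnear w hwn))
    rw [h2] at key
    obtain ⟨p'', hp'', hpe⟩ := key
    beta_reduce at hpe
    refine ⟨p'', hp'', ?_⟩
    show (t:ℝ) • p'' + v = y
    rw [hpe, smul_add, smul_smul, hsε, one_smul, hwdef]
    abel
  constructor
  · calc ENNReal.ofReal (((t:ℝ) - s)^d) * volume P
        = volume ((fun x => ((t:ℝ) - s) • x + (v + s • x0)) '' P) :=
          (volume_affine_image _ (by linarith) _ _).symm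
      _ ≤ volume (⋃ z ∈ S ∩ latticePts d, (z + ·) '' cube d) := measure_mono hsubL
      _ = (TL P v t : ℝ≥0∞) := hTL.symm
  · calc (TL P v t : ℝ≥0∞)
        = volume (⋃ z ∈ S ∩ latticePts d, (z + ·) '' cube d) := hTL
      _ ≤ volume ((fun x => ((t:ℝ) + s) • x + (v - s • x0)) '' P) := measure_mono hsubU
      _ = ENNReal.ofReal (((t:ℝ) + s)^d) * volume P := volume_affine_image _ (by positivity) _ _


lemma tendsto_TL {P : Set (Fin d → ℝ)} (hconv : Convex ℝ P) (hcomp : IsCompact P)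
    {x0 : Fin d → ℝ} {ε : ℝ} (hε : 0 < ε) (hball : Metric.closedBall x0 ε ⊆ P)
    (v : Fin d → ℝ) (u : ℕ → ℕ) (hu : Tendsto (fun n => (u n : ℝ)) atTop atTop) :
    Tendsto (fun n => (TL P v (u n) : ℝ) / (u n : ℝ)^d) atTop
      (𝓝 ((volume P).toReal)) := by
  set c := (volume P).toReal with hc
  have hfin : volume P ≠ ⊤ := hcomp.measure_lt_top.ne
  set s : ℝ := 1/ε with hsdef
  have hs : 0 < s := by positivity
  have h0 : Tendsto (fun n => s / (u n : ℝ)) atTop (𝓝 0) :=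
    tendsto_const_nhds.div_atTop hu
  have hg : Tendsto (fun n => (1 - s/(u n : ℝ))^d * c) atTop (𝓝 c) := by
    have h1 : Tendsto (fun n => ((1:ℝ) - s/(u n : ℝ))^d * c) atTop (𝓝 (((1:ℝ) - 0)^d * c)) :=
      ((tendsto_const_nhds.sub h0).pow d).mul_const c
    simpa using h1
  have hh : Tendsto (fun n => (1 + s/(u n : ℝ))^d * c) atTop (𝓝 c) := by
    have h1 : Tendsto (fun n => ((1:ℝ) + s/(u n : ℝ))^d * c) atTop (𝓝 (((1:ℝ) + 0)^d * c)) :=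
      ((tendsto_const_nhds.add h0).pow d).mul_const c
    simpa using h1
  have hev : ∀ᶠ n in atTop, max s 1 ≤ (u n : ℝ) := hu.eventually_ge_atTop _
  refine tendsto_of_tendsto_of_tendsto_of_le_of_le' hg hh ?_ ?_
  · filter_upwards [hev] with n hn
    have hs1 : s ≤ (u n : ℝ) := le_trans (le_max_left _ _) hn
    have hupos : (0:ℝ) < (u n : ℝ) := lt_of_lt_of_le zero_lt_one (le_trans (le_max_right _ _) hn)
    have hl := (sandwich hconv hcomp hε hball v (t := u n) hs1).1
    have hlr : ((u n : ℝ) - s)^d * c ≤ (TL P v (u n) : ℝ) := by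
      have h2 := ENNReal.toReal_mono (ENNReal.natCast_ne_top _) hl
      rwa [ENNReal.toReal_mul, ENNReal.toReal_ofReal
        (pow_nonneg (sub_nonneg.2 hs1) d), ENNReal.toReal_natCast _] at h2
    have h1d : (1 - s/(u n : ℝ))^d * c = (((u n : ℝ) - s)^d * c)/((u n : ℝ))^d := by
      rw [one_sub_div hupos.ne', div_pow]; ring
    rw [h1d]
    gcongr
  · filter_upwards [hev] with n hn
    have hs1 : s ≤ (u n : ℝ) := le_trans (le_max_left _ _) hn
    have hupos : (0:ℝ) < (u n : ℝ) := lt_of_lt_of_le zero_lt_one (le_trans (le_max_right _ _) hn)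
    have hr := (sandwich hconv hcomp hε hball v (t := u n) hs1).2
    have hrr : (TL P v (u n) : ℝ) ≤ ((u n : ℝ) + s)^d * c := by
      have h2 := ENNReal.toReal_mono (ENNReal.mul_ne_top ENNReal.ofReal_ne_top hfin) hr
      rwa [ENNReal.toReal_mul, ENNReal.toReal_ofReal
        (pow_nonneg (by linarith) d), ENNReal.toReal_natCast _] at h2
    have h1d : (1 + s/(u n : ℝ))^d * c = (((u n : ℝ) + s)^d * c)/((u n : ℝ))^d := by
      have h3 : 1 + s/(u n : ℝ) = ((u n : ℝ) + s)/(u n : ℝ) := by field_simp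
      rw [h3, div_pow]; ring
    rw [h1d]
    gcongr


lemma poly_limit {f : Polynomial ℝ} {d : ℕ} {c : ℝ} (hc : 0 < c)
    {u : ℕ → ℕ} (hu : Tendsto (fun n => (u n : ℝ)) atTop atTop)
    (h : Tendsto (fun n => f.eval (u n : ℝ) / (u n : ℝ)^d) atTop (𝓝 c)) :
    f.degree = (d : ℕ) ∧ f.coeff d = c := by
  have hf0 : f ≠ 0 := by
    rintro rfl
    have h2 : Tendsto (fun _ : ℕ => (0:ℝ)) atTop (𝓝 c) := by simpa using h
    exact hc.ne' (tendsto_nhds_unique h2 tendsto_const_nhds)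
  set e := f.natDegree with he
  set L := f.leadingCoeff with hL
  have hLne : L ≠ 0 := Polynomial.leadingCoeff_ne_zero.2 hf0
  have hb : Tendsto (fun n => f.eval (u n : ℝ) / (u n : ℝ)^e) atTop (𝓝 L) := by
    have h1 : Tendsto (fun x : ℝ => f.eval x / (L * x^e)) atTop (𝓝 1) := by
      refine (Asymptotics.isEquivalent_iff_tendsto_one ?_).1
        (Polynomial.isEquivalent_atTop_lead f)
      filter_upwards [eventually_gt_atTop (0:ℝ)] with x hx
      exact mul_ne_zero hLne (pow_ne_zero _ hx.ne')
    have h2 := (h1.const_mul L).comp hu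
    have h3 : ∀ᶠ n in atTop, L * (f.eval (u n : ℝ) / (L * (u n : ℝ)^e))
        = f.eval (u n : ℝ) / (u n : ℝ)^e := by
      filter_upwards [hu.eventually_gt_atTop 0] with n hn
      field_simp
    rw [mul_one] at h2
    exact h2.congr' h3
  have hupos : ∀ᶠ n in atTop, (0:ℝ) < (u n : ℝ) := hu.eventually_gt_atTop 0
  have hbne : ∀ᶠ n in atTop, f.eval (u n : ℝ) / (u n : ℝ)^e ≠ 0 := hb.eventually_ne hLne
  have hr : Tendsto (fun n => ((u n : ℝ))^((e:ℤ) - (d:ℤ))) atTop (𝓝 (c / L)) := by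
    refine (h.div hb hLne).congr' ?_
    filter_upwards [hupos, hbne] with n hn hbn
    have hfne : Polynomial.eval ((u n : ℝ)) f ≠ 0 := fun h0 => hbn (by rw [h0, zero_div])
    have hz : ((u n : ℝ))^((e:ℤ) - (d:ℤ)) = (u n : ℝ)^e / (u n : ℝ)^d := by
      rw [zpow_sub₀ hn.ne', zpow_natCast, zpow_natCast]
    simp only [Pi.div_apply]
    rw [hz]
    field_simp
  have hed : e = d := by
    by_contra hne
    rcases lt_or_gt_of_ne hne with hlt | hgt
    · -- e < d : r → 0, so c / L = 0
      have hz : Tendsto (fun n => ((u n : ℝ))^((e:ℤ) - (d:ℤ))) atTop (𝓝 0) := by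
        exact (tendsto_zpow_atTop_zero (𝕜 := ℝ) (by omega : (e:ℤ) - (d:ℤ) < 0)).comp hu
      have := tendsto_nhds_unique hr hz
      rw [_root_.div_eq_zero_iff] at this
      rcases this with h' | h'
      · exact hc.ne' h'
      · exact hLne h'
    · -- e > d : r → ∞
      have hz : Tendsto (fun n => ((u n : ℝ))^((e:ℤ) - (d:ℤ))) atTop atTop := by
        exact (tendsto_zpow_atTop_atTop (α := ℝ) (by omega : 0 < (e:ℤ) - (d:ℤ))).comp hu
      exact not_tendsto_nhds_of_tendsto_atTop hz _ hr
  have hLc : L = c := by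
    apply tendsto_nhds_unique _ h
    have : (fun n => f.eval (u n : ℝ) / (u n : ℝ)^e)
        = fun n => f.eval (u n : ℝ) / (u n : ℝ)^d := by rw [hed]
    rw [← this]; exact hb
  constructor
  · rw [Polynomial.degree_eq_natDegree hf0, ← he, hed]
  · rw [← hed, he]
    rw [← Polynomial.leadingCoeff]
    rw [← hL, hLc]


end Ehr

theorem stmt10 {d : ℕ} (P : Set (Fin d → ℝ)) (hP : IsRationalDPolytope P)
    (v : Fin d → ℝ) (q : ℕ) (hq : 0 < q)
    -- `qP` is integral: every vertex (extreme point) of `P` lies in `(1/q)ℤ^d`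
    (hqP : ∀ x ∈ Set.extremePoints ℝ P, ∀ i, ∃ n : ℤ, (q : ℝ) * x i = (n : ℝ))
    (k : ℕ) (f : Polynomial ℝ)
    (hf : ∀ t : ℕ, t % q = k % q → f.eval (t : ℝ) = (TL P v t : ℝ)) :
    f.degree = (d : ℕ) ∧ f.coeff d = (MeasureTheory.volume P).toReal := by
  obtain ⟨V, -, hPhull, hspan⟩ := hP
  have hconv : Convex ℝ P := hPhull ▸ convex_convexHull ℝ _
  have hcomp : IsCompact P := hPhull ▸ V.finite_toSet.isCompact_convexHull (𝕜 := ℝ)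
  obtain ⟨x0, hx0⟩ : (interior P).Nonempty :=
    (hconv.interior_nonempty_iff_affineSpan_eq_top).2 hspan
  obtain ⟨ε, hε, hball⟩ : ∃ ε > 0, Metric.closedBall x0 ε ⊆ P := by
    obtain ⟨ε, hε, h⟩ := Metric.isOpen_iff.1 isOpen_interior x0 hx0
    exact ⟨ε/2, by linarith, (Metric.closedBall_subset_ball (by linarith)).trans
      (h.trans interior_subset)⟩
  have hvolpos : 0 < (volume P).toReal := by
    apply ENNReal.toReal_pos
    · exact ((isOpen_interior.measure_pos volume ⟨x0, hx0⟩).trans_le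
        (measure_mono interior_subset)).ne'
    · exact hcomp.measure_lt_top.ne
  set u : ℕ → ℕ := fun n => k + n * q with hu_def
  have humod : ∀ n, u n % q = k % q := fun n => Nat.add_mul_mod_self_right k n q
  have huT : Tendsto (fun n => (u n : ℝ)) atTop atTop := by
    apply tendsto_natCast_atTop_atTop.comp
    apply tendsto_atTop_mono (fun n => ?_) tendsto_id
    have := Nat.le_mul_of_pos_right n hq
    simp only [hu_def, id_eq]
    omega
  have hT := Ehr.tendsto_TL hconv hcomp hε hball v u huT
  have hfeq : (fun n => (TL P v (u n) : ℝ) / (u n : ℝ)^d)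
      = fun n => f.eval ((u n : ℝ)) / (u n : ℝ)^d := by
    funext n; rw [hf (u n) (humod n)]
  rw [hfeq] at hT
  exact Ehr.poly_limit hvolpos huT hT
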